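/- Let k ≥ 2 and 2 ≤ s, ℓ ≤ k be integers and M ≥ 1 an integer. Let q be a prime power and let f(Z) = Σ_{i=0}^{s−1} a_i(T) Z^i and g(Z) = Σ_{i=0}^{ℓ−1} b_i(T) Z^i be polynomials in Z with coefficients a_i, b_i ∈ F_q[T], such that a_{s−1} ≠ 0, b_{ℓ−1} ≠ 0, and deg_T a_i < (k−i)M and deg_T b_i < (k−i)M for all i. Then the resultant (with respect to Z) of f and g, which is a polynomial in F_q[T], satisfies deg_T Res(f,g) ≤ (k² − 1)M. -/

import Mathlib

/-- The Sylvester matrix of two polynomials `f` and `g` over a commutative ring `R`,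
with respect to prescribed sizes `m` and `n` (intended to be the degrees of `f` and `g`):
the `(n + m) × (n + m)` matrix whose first `n` rows are the successively shifted
coefficient vectors of `f`, and whose remaining `m` rows are the successively shifted
coefficient vectors of `g`. -/
noncomputable def sylvesterMatrix {R : Type*} [CommRing R] (f g : Polynomial R)
    (m n : ℕ) : Matrix (Fin (n + m)) (Fin (n + m)) R :=
  Matrix.of fun i j =>
    if (i : ℕ) < n then
      (if (i : ℕ) ≤ (j : ℕ) then f.coeff ((j : ℕ) - (i : ℕ)) else 0)
    else
      (if (i : ℕ) - n ≤ (j : ℕ) then g.coeff ((j : ℕ) - ((i : ℕ) - n)) else 0)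

/-- The resultant of two polynomials `f` and `g` over a commutative ring `R`:
the determinant of their Sylvester matrix (taken with respect to their degrees). -/
noncomputable def resultant {R : Type*} [CommRing R] (f g : Polynomial R) : R :=
  (sylvesterMatrix f g f.natDegree g.natDegree).det

set_option maxHeartbeats 1000000 in
/-- Let `k ≥ 2`, `2 ≤ s, ℓ ≤ k` and `M ≥ 1` be integers, `F` a finite
field. Let `f(Z) = Σ_{i=0}^{s−1} aᵢ(T) Zⁱ` and `g(Z) = Σ_{i=0}^{ℓ−1} bᵢ(T) Zⁱ` be
polynomials in `Z` with coefficients `aᵢ, bᵢ ∈ F[T]` such that `a_{s−1} ≠ 0`,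
`b_{ℓ−1} ≠ 0`, and `deg_T aᵢ < (k−i)M`, `deg_T bᵢ < (k−i)M` for all `i`. Then the
resultant (with respect to `Z`) of `f` and `g`, an element of `F[T]`, satisfies
`deg_T Res(f, g) ≤ (k² − 1)M`. -/
theorem degree_resultant_le
    (F : Type) [Field F] [Fintype F]
    (k s ℓ M : ℕ) (hk : 2 ≤ k) (hs2 : 2 ≤ s) (hsk : s ≤ k) (hl2 : 2 ≤ ℓ) (hlk : ℓ ≤ k)
    (hM : 1 ≤ M)
    (f g : Polynomial (Polynomial F))
    (hfdeg : f.natDegree = s - 1) (hflead : f.coeff (s - 1) ≠ 0)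
    (hgdeg : g.natDegree = ℓ - 1) (hglead : g.coeff (ℓ - 1) ≠ 0)
    (hfcoeff : ∀ i < s, (f.coeff i).degree < (((k - i) * M : ℕ) : WithBot ℕ))
    (hgcoeff : ∀ i < ℓ, (g.coeff i).degree < (((k - i) * M : ℕ) : WithBot ℕ)) :
    (resultant f g).natDegree ≤ (k ^ 2 - 1) * M := by
  classical
  set m := f.natDegree with hm
  set n := g.natDegree with hn
  set N := n + m with hNdef
  set A : Matrix (Fin N) (Fin N) (Polynomial F) := sylvesterMatrix f g m n with hA
  set shift : Fin N → ℕ := fun r => if (r : ℕ) < n then (r : ℕ) else (r : ℕ) - n with hshift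
  -- per-entry bound
  have key : ∀ r j : Fin N, A r j ≠ 0 →
      ((A r j).natDegree : ℤ) + ((j : ℤ) - (shift r : ℤ)) * M ≤ (k : ℤ) * M := by
    intro r j hne
    by_cases hr : (r : ℕ) < n
    · simp only [hA, sylvesterMatrix, Matrix.of_apply, if_pos hr] at hne ⊢
      simp only [hshift, if_pos hr]
      by_cases hle : (r : ℕ) ≤ (j : ℕ)
      · rw [if_pos hle] at hne ⊢
        set t := (j : ℕ) - (r : ℕ) with ht
        have hts : t < s := by
          have h1 := Polynomial.le_natDegree_of_ne_zero hne
          omega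
        have hdeg : (f.coeff t).natDegree < (k - t) * M :=
          (Polynomial.natDegree_lt_iff_degree_lt hne).mpr (hfcoeff t hts)
        have htk : t ≤ k := le_of_lt (hts.trans_le hsk)
        have hjr : ((j : ℤ) - (r : ℤ)) = (t : ℤ) := by omega
        rw [hjr]
        have : ((f.coeff t).natDegree : ℤ) < ((k : ℤ) - t) * M := by
          have h2 : ((f.coeff t).natDegree : ℤ) < (((k - t) * M : ℕ) : ℤ) :=
            Nat.cast_lt.mpr hdeg
          rwa [Nat.cast_mul, Nat.cast_sub htk] at h2
        nlinarith [this]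
      · rw [if_neg hle] at hne; exact absurd rfl hne
    · simp only [hA, sylvesterMatrix, Matrix.of_apply, if_neg hr] at hne ⊢
      simp only [hshift, if_neg hr]
      by_cases hle : (r : ℕ) - n ≤ (j : ℕ)
      · rw [if_pos hle] at hne ⊢
        set t := (j : ℕ) - ((r : ℕ) - n) with ht
        have hts : t < ℓ := by
          have h1 := Polynomial.le_natDegree_of_ne_zero hne
          omega
        have hdeg : (g.coeff t).natDegree < (k - t) * M :=
          (Polynomial.natDegree_lt_iff_degree_lt hne).mpr (hgcoeff t hts)
        have htk : t ≤ k := le_of_lt (hts.trans_le hlk)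
        have hjr : ((j : ℤ) - ((r : ℕ) - n : ℕ)) = (t : ℤ) := by omega
        rw [hjr]
        have : ((g.coeff t).natDegree : ℤ) < ((k : ℤ) - t) * M := by
          have h2 : ((g.coeff t).natDegree : ℤ) < (((k - t) * M : ℕ) : ℤ) :=
            Nat.cast_lt.mpr hdeg
          rwa [Nat.cast_mul, Nat.cast_sub htk] at h2
        nlinarith [this]
      · rw [if_neg hle] at hne; exact absurd rfl hne
  have hn1 : 1 ≤ n := by omega
  have hnk : n ≤ k - 1 := by omega
  have hm1 : 1 ≤ m := by omega
  have hmk : m ≤ k - 1 := by omega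
  -- sum of shifts
  have hshiftsum : ∑ r : Fin N, ((r : ℤ) - (shift r : ℤ)) = (n : ℤ) * m := by
    have heach : ∀ r : Fin N, ((r : ℤ) - (shift r : ℤ)) =
        (if (r : ℕ) < n then (0 : ℤ) else n) := by
      intro r
      simp only [hshift]
      split <;> omega
    rw [Finset.sum_congr rfl fun r _ => heach r]
    rw [Fin.sum_univ_eq_sum_range (fun i => if i < n then (0 : ℤ) else n)]
    have : ∀ mm : ℕ, ∑ i ∈ Finset.range (n + mm), (if i < n then (0 : ℤ) else n)
        = (n : ℤ) * mm := by
      intro mm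
      induction mm with
      | zero => simp [Finset.sum_ite_of_true]
      | succ p ih =>
        rw [show n + (p + 1) = (n + p) + 1 by ring, Finset.sum_range_succ, ih,
          if_neg (by omega)]
        push_cast; ring
    exact this m
  rw [resultant, Matrix.det_apply]
  apply Polynomial.natDegree_sum_le_of_forall_le
  intro σ _
  rw [Units.smul_def]
  have hred : (((Equiv.Perm.sign σ : ℤˣ) : ℤ) • ∏ i, A (σ i) i).natDegree
      = (∏ i, A (σ i) i).natDegree := by
    rcases Int.units_eq_one_or (Equiv.Perm.sign σ) with h1 | h1 <;>
      simp [h1, Polynomial.natDegree_neg]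
  rw [hred]
  by_cases hz : (∏ i, A (σ i) i) = 0
  · rw [hz]; simp
  · rw [Polynomial.natDegree_prod _ _ (fun i _ => by
      intro h
      exact hz (Finset.prod_eq_zero (Finset.mem_univ i) h))]
    have hentry : ∀ i : Fin N, A (σ i) i ≠ 0 := fun i h =>
      hz (Finset.prod_eq_zero (Finset.mem_univ i) h)
    -- pass to ℤ
    rw [← Nat.cast_le (α := ℤ)]
    push_cast
    have hsum : ∑ i : Fin N, (((A (σ i) i).natDegree : ℤ) + ((i : ℤ) - (shift (σ i) : ℤ)) * M)
        ≤ ∑ _i : Fin N, (k : ℤ) * M :=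
      Finset.sum_le_sum fun i _ => key (σ i) i (hentry i)
    rw [Finset.sum_add_distrib, Finset.sum_const, Finset.card_univ, Fintype.card_fin] at hsum
    have hperm : ∑ i : Fin N, ((i : ℤ) - (shift (σ i) : ℤ)) = (n : ℤ) * m := by
      have h1 : ∑ i : Fin N, (shift (σ i) : ℤ) = ∑ r : Fin N, (shift r : ℤ) :=
        Equiv.sum_comp σ (fun r => (shift r : ℤ))
      calc ∑ i : Fin N, ((i : ℤ) - (shift (σ i) : ℤ))
          = ∑ i : Fin N, (i : ℤ) - ∑ i : Fin N, (shift (σ i) : ℤ) := Finset.sum_sub_distrib _ _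
        _ = ∑ r : Fin N, (r : ℤ) - ∑ r : Fin N, (shift r : ℤ) := by rw [h1]
        _ = ∑ r : Fin N, ((r : ℤ) - (shift r : ℤ)) := (Finset.sum_sub_distrib _ _).symm
        _ = (n : ℤ) * m := hshiftsum
    have hmul : ∑ i : Fin N, ((i : ℤ) - (shift (σ i) : ℤ)) * M
        = ((n : ℤ) * m) * M := by
      rw [← Finset.sum_mul, hperm]
    rw [hmul] at hsum
    -- final arithmetic
    have hk2 : (((k ^ 2 - 1) * M : ℕ) : ℤ) = ((k:ℤ)^2 - 1) * M := by
      have h1 : 1 ≤ k ^ 2 := Nat.one_le_pow 2 k (by omega)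
      rw [Nat.cast_mul, Nat.cast_sub h1, Nat.cast_pow, Nat.cast_one]
    rw [nsmul_eq_mul] at hsum
    have hNk : ((N : ℕ) : ℤ) = (n : ℤ) + m := by rw [hNdef]; push_cast; ring
    have h1 : (1:ℤ) ≤ n := by exact_mod_cast hn1
    have h2 : (n:ℤ) ≤ (k:ℤ) - 1 := by
      have : ((n:ℕ):ℤ) ≤ ((k - 1 : ℕ) : ℤ) := Nat.cast_le.mpr hnk
      rw [Nat.cast_sub (by omega)] at this; simpa using this
    have h3 : (1:ℤ) ≤ m := by exact_mod_cast hm1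
    have h4 : (m:ℤ) ≤ (k:ℤ) - 1 := by
      have : ((m:ℕ):ℤ) ≤ ((k - 1 : ℕ) : ℤ) := Nat.cast_le.mpr hmk
      rw [Nat.cast_sub (by omega)] at this; simpa using this
    have hM' : (1:ℤ) ≤ M := by exact_mod_cast hM
    have hx : (1:ℤ) * 1 ≤ ((k:ℤ) - n) * ((k:ℤ) - m) :=
      mul_le_mul (by omega) (by omega) (by omega) (by omega)
    have hcoef : ((n:ℤ) + m) * k - n * m ≤ (k:ℤ)^2 - 1 := by nlinarith [hx]
    have hcoefM : (((n:ℤ) + m) * k - n * m) * M ≤ ((k:ℤ)^2 - 1) * M :=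
      mul_le_mul_of_nonneg_right hcoef (by omega)
    have hfin : ∑ i : Fin N, ((A (σ i) i).natDegree : ℤ) ≤ ((k:ℤ)^2 - 1) * M := by
      rw [hNk] at hsum
      nlinarith [hsum, hcoefM]
    calc (∑ i : Fin N, ((A (σ i) i).natDegree : ℤ)) ≤ ((k:ℤ)^2 - 1) * M := hfin
      _ = (((k ^ 2 - 1) * M : ℕ) : ℤ) := hk2.symm
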